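/- Let U > 0 be a real number and let H, Ĥ be K×N complex matrices, V an N×K' complex matrix, and D̂ a K×K' complex matrix. Then U·‖HV − D̂‖_F² − U·‖ĤV − D̂‖_F² ≤ 2U·(‖H‖_F·‖V‖_F + ‖D̂‖_F)·‖V‖_F·‖H − Ĥ‖_F. -/
import Mathlib

open Matrix

/-- Frobenius norm of a complex matrix. -/
noncomputable def frobNorm {m n : Type*} [Fintype m] [Fintype n]
    (A : Matrix m n ℂ) : ℝ :=
  Real.sqrt (∑ i, ∑ j, ‖A i j‖ ^ 2)

attribute [local instance] Matrix.frobeniusSeminormedAddCommGroup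

lemma frobNorm_eq_norm {m n : Type*} [Fintype m] [Fintype n]
    (A : Matrix m n ℂ) : frobNorm A = ‖A‖ := by
  rw [frobNorm, Matrix.frobenius_norm_def, Real.sqrt_eq_rpow]
  norm_num [Real.rpow_two]

set_option maxHeartbeats 1000000 in
/-- Step 2 in the proof of Lemma 4. -/
theorem phi_channel_perturbation_bound {K N K' : ℕ} (U : ℝ) (hU : 0 < U)
    (H Hhat : Matrix (Fin K) (Fin N) ℂ) (V : Matrix (Fin N) (Fin K') ℂ)
    (Dhat : Matrix (Fin K) (Fin K') ℂ) :
    U * frobNorm (H * V - Dhat) ^ 2 - U * frobNorm (Hhat * V - Dhat) ^ 2 ≤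
      2 * U * (frobNorm H * frobNorm V + frobNorm Dhat) * frobNorm V *
        frobNorm (H - Hhat) := by
  simp only [frobNorm_eq_norm]
  set A := H * V - Dhat
  set B := Hhat * V - Dhat
  have hAB : A - B = (H - Hhat) * V := by
    simp [A, B, Matrix.sub_mul]
  have h1 : ‖A‖ - ‖A - B‖ ≤ ‖B‖ := by
    have := norm_sub_norm_le A (A - B)
    simpa using this
  have h2 : ‖A - B‖ ≤ ‖H - Hhat‖ * ‖V‖ := by
    rw [hAB]; exact Matrix.frobenius_norm_mul _ _
  have h3 : ‖A‖ ≤ ‖H‖ * ‖V‖ + ‖Dhat‖ := by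
    calc ‖A‖ ≤ ‖H * V‖ + ‖Dhat‖ := norm_sub_le _ _
    _ ≤ ‖H‖ * ‖V‖ + ‖Dhat‖ := by
        gcongr; exact Matrix.frobenius_norm_mul _ _
  have hB : (0:ℝ) ≤ ‖B‖ := norm_nonneg _
  have hC : (0:ℝ) ≤ ‖A - B‖ := norm_nonneg _
  have hA : (0:ℝ) ≤ ‖A‖ := norm_nonneg _
  have hV : (0:ℝ) ≤ ‖V‖ := norm_nonneg _
  have hHh : (0:ℝ) ≤ ‖H - Hhat‖ := norm_nonneg _
  have step1 : ‖A‖ ^ 2 - ‖B‖ ^ 2 ≤ 2 * ‖A‖ * ‖A - B‖ := by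
    rcases le_or_gt ‖A - B‖ ‖A‖ with h | h
    · have hx : 0 ≤ ‖A‖ - ‖A - B‖ := by linarith
      have := mul_self_le_mul_self hx h1
      nlinarith [sq_nonneg ‖A - B‖]
    · nlinarith
  have step2 : ‖A‖ * ‖A - B‖ ≤ (‖H‖ * ‖V‖ + ‖Dhat‖) * (‖H - Hhat‖ * ‖V‖) :=
    mul_le_mul h3 h2 hC (by positivity)
  have key : ‖A‖ ^ 2 - ‖B‖ ^ 2 ≤ 2 * ((‖H‖ * ‖V‖ + ‖Dhat‖) * (‖H - Hhat‖ * ‖V‖)) := by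
    linarith
  nlinarith [mul_le_mul_of_nonneg_left key hU.le]
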